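/- Let δ ≥ 100 be a real number and set m = ⌈√δ⌉. Let Δ₁, …, Δ_m be independent, identically distributed real random variables, each having the law of an exponential random variable with rate 1 conditioned on lying in [0, δ] (i.e., the probability measure with density e^{−x}/(1 − e^{−δ}) on [0, δ]). Then P[Δ₁ + Δ₂ + ⋯ + Δ_m > m/4] ≥ 1 − 2^{3 − m/2}. -/

import Mathlib

open MeasureTheory ProbabilityTheory
open scoped NNReal ENNReal

lemma aux_indep_congr {Ω ι : Type*} [MeasurableSpace Ω] {μ : Measure Ω}
    [Countable ι] {f g : ι → Ω → ℝ}
    (hfg : ∀ i, f i =ᵐ[μ] g i)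
    (h : iIndepFun f μ) :
    iIndepFun g μ := by
  rw [iIndepFun_iff_measure_inter_preimage_eq_mul] at h ⊢
  intro S sets hsets
  have hall : ∀ᵐ ω ∂μ, ∀ i, f i ω = g i ω := ae_all_iff.2 hfg
  have h1 : μ (⋂ i ∈ S, g i ⁻¹' sets i) = μ (⋂ i ∈ S, f i ⁻¹' sets i) := by
    apply measure_congr
    rw [Filter.eventuallyEq_set]
    filter_upwards [hall] with ω hω
    simp [Set.mem_iInter, Set.mem_preimage, hω]
  rw [h1, h S hsets]
  refine Finset.prod_congr rfl fun i _ => ?_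
  apply measure_congr
  rw [Filter.eventuallyEq_set]
  filter_upwards [hfg i] with ω hω
  simp [Set.mem_preimage, hω]

lemma aux_integral {δ c : ℝ} (hc : 0 < c) :
    ∫ x, Real.exp (-1 * x)
        ∂((volume.restrict (Set.Icc 0 δ)).withDensity
            fun x => ENNReal.ofReal (Real.exp (-x) / c)) ≤ 1 / (2 * c) := by
  have hdens : (fun x => ENNReal.ofReal (Real.exp (-x) / c))
      = fun x => ((Real.toNNReal (Real.exp (-x) / c) : ℝ≥0) : ℝ≥0∞) := rfl
  have hfmeas : Measurable fun x : ℝ => Real.toNNReal (Real.exp (-x) / c) :=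
    (((Real.continuous_exp.comp continuous_neg).div_const c).measurable).real_toNNReal
  rw [hdens, integral_withDensity_eq_integral_smul hfmeas]
  have hpt : ∀ x : ℝ, (Real.toNNReal (Real.exp (-x) / c)) • Real.exp (-1 * x)
      = (1 / c) * Real.exp (-(2 * x)) := by
    intro x
    rw [NNReal.smul_def, Real.coe_toNNReal _ (by positivity), smul_eq_mul,
      div_mul_eq_mul_div, ← Real.exp_add, show -x + -1 * x = -(2 * x) by ring]
    ring
  simp only [hpt]
  have hInt : IntegrableOn (fun x : ℝ => (1 / c) * Real.exp (-(2 * x))) (Set.Ici 0) := by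
    rw [integrableOn_Ici_iff_integrableOn_Ioi]
    have h0 : (fun x : ℝ => (1 / c) * Real.exp (-(2 * x)))
        = fun x : ℝ => (1/c) * Real.exp (-2 * x) := by
      funext x; ring_nf
    rw [h0]
    exact (exp_neg_integrableOn_Ioi 0 two_pos).const_mul _
  have hmono : ∫ x in Set.Icc (0:ℝ) δ, (1 / c) * Real.exp (-(2 * x))
      ≤ ∫ x in Set.Ici (0:ℝ), (1 / c) * Real.exp (-(2 * x)) := by
    apply setIntegral_mono_set hInt
    · filter_upwards with x using by positivity
    · exact (Set.Icc_subset_Ici_self).eventuallyLE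
  refine hmono.trans ?_
  rw [integral_Ici_eq_integral_Ioi, MeasureTheory.integral_const_mul]
  have h2 : ∫ x in Set.Ioi (0:ℝ), Real.exp (-(2 * x)) = 1 / 2 := by
    have := integral_comp_mul_left_Ioi (fun x => Real.exp (-x)) 0 two_pos
    simp only [mul_zero] at this
    rw [this, integral_exp_neg_Ioi_zero]
    norm_num
  rw [h2, one_div, one_div, one_div, inv_mul_eq_div, div_le_iff₀ (by positivity)]
  rw [mul_inv, mul_assoc, inv_mul_cancel₀ hc.ne', mul_one]

lemma aux_numeric (m : ℕ) :
    Real.exp (-(-1) * ((m:ℝ)/4)) * (101/200 : ℝ) ^ m ≤ (2:ℝ) ^ ((3:ℝ) - (m:ℝ)/2) := by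
  have h1 : Real.exp 1 ≤ 2.7182818286 := Real.exp_one_lt_d9.le
  have he : Real.exp (1/4) ≤ 1.29 := by
    refine le_of_pow_le_pow_left₀ (n := 4) (by norm_num) (by norm_num) ?_
    rw [← Real.exp_nat_mul]
    norm_num
    linarith
  have hsq := Real.sq_sqrt (by norm_num : (0:ℝ) ≤ 2)
  have hpos : 0 < Real.sqrt 2 := Real.sqrt_pos.2 (by norm_num)
  have hinv : Real.sqrt 2 * (Real.sqrt 2)⁻¹ = 1 := mul_inv_cancel₀ hpos.ne'
  have hkey : Real.exp (1/4) * (101/200 : ℝ) ≤ (2:ℝ) ^ (-(1/2) : ℝ) := by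
    have hs : (2:ℝ) ^ (-(1/2) : ℝ) = (Real.sqrt 2)⁻¹ := by
      rw [Real.rpow_neg (by norm_num), Real.sqrt_eq_rpow]
    rw [hs]
    have h2 : (1.29 : ℝ) * (101/200) ≤ (Real.sqrt 2)⁻¹ := by
      nlinarith [sq_nonneg (Real.sqrt 2 - 1.414), inv_nonneg.2 hpos.le]
    nlinarith [Real.exp_pos (1/4 : ℝ)]
  have hL : Real.exp (-(-1) * ((m:ℝ)/4)) = Real.exp (1/4) ^ m := by
    rw [show -(-1 : ℝ) * ((m:ℝ)/4) = (m:ℝ) * (1/4) by ring, Real.exp_nat_mul]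
  rw [hL, ← mul_pow]
  calc (Real.exp (1/4) * (101/200 : ℝ)) ^ m ≤ ((2:ℝ) ^ (-(1/2) : ℝ)) ^ m := by
        apply pow_le_pow_left₀ (by positivity) hkey
    _ = (2:ℝ) ^ ((-(1/2) : ℝ) * m) := by
        rw [← Real.rpow_natCast ((2:ℝ) ^ (-(1/2) : ℝ)) m, ← Real.rpow_mul (by norm_num)]
    _ ≤ (2:ℝ) ^ ((3:ℝ) - (m:ℝ)/2) := by
        apply Real.rpow_le_rpow_left_iff (by norm_num : (1:ℝ) < 2) |>.2
        have : (0:ℝ) ≤ (m:ℝ) := Nat.cast_nonneg m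
        linarith

/-- Lemma 4.3 (probability bound): for `δ ≥ 100` and `m = ⌈√δ⌉`, if `Δ₁,…,Δ_m` are
i.i.d. with the law of an `Exp(1)` variable conditioned on `[0, δ]` (density
`e^{−x}/(1 − e^{−δ})` on `[0, δ]`), then `P[Δ₁ + ⋯ + Δ_m > m/4] ≥ 1 − 2^{3 − m/2}`. -/
theorem stmt_4 {Ω : Type*} [MeasurableSpace Ω] (μ : Measure Ω) [IsProbabilityMeasure μ]
    (δ : ℝ) (hδ : 100 ≤ δ) (m : ℕ) (hm : m = ⌈Real.sqrt δ⌉₊)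
    (Δ : Fin m → Ω → ℝ)
    (hindep : iIndepFun Δ μ)
    (hlaw : ∀ i, Measure.map (Δ i) μ =
      (volume.restrict (Set.Icc (0 : ℝ) δ)).withDensity
        (fun x => ENNReal.ofReal (Real.exp (-x) / (1 - Real.exp (-δ))))) :
    ENNReal.ofReal (1 - 2 ^ ((3 : ℝ) - (m : ℝ) / 2))
      ≤ μ {ω | (m : ℝ) / 4 < ∑ i, Δ i ω} := by
  classical
  set c : ℝ := 1 - Real.exp (-δ) with hc_def
  have hδ0 : (0:ℝ) < δ := by linarith
  have hexpδ : Real.exp (-δ) ≤ 1/101 := by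
    rw [Real.exp_neg, inv_le_comm₀ (Real.exp_pos δ) (by norm_num)]
    have h := Real.add_one_le_exp δ
    linarith
  have hexpδ0 : 0 < Real.exp (-δ) := Real.exp_pos _
  have hc_lb : (100:ℝ)/101 ≤ c := by rw [hc_def]; linarith
  have hc0 : (0:ℝ) < c := by linarith
  set ν : Measure ℝ := (volume.restrict (Set.Icc (0 : ℝ) δ)).withDensity
      (fun x => ENNReal.ofReal (Real.exp (-x) / c)) with hν_def
  -- ν is nonzero
  have hν_ne : ν ≠ 0 := by
    intro h0
    have huniv : ν Set.univ = 0 := by rw [h0]; rfl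
    have h1 : ν Set.univ = ∫⁻ x, ENNReal.ofReal (Real.exp (-x) / c)
        ∂(volume.restrict (Set.Icc (0 : ℝ) δ)) := by
      rw [hν_def, withDensity_apply _ MeasurableSet.univ, Measure.restrict_univ]
    have hlb : ENNReal.ofReal (Real.exp (-δ) / c) * volume (Set.Icc (0:ℝ) δ)
        ≤ ∫⁻ x, ENNReal.ofReal (Real.exp (-x) / c)
          ∂(volume.restrict (Set.Icc (0 : ℝ) δ)) := by
      rw [← setLIntegral_const]
      refine lintegral_mono_ae ?_
      filter_upwards [ae_restrict_mem measurableSet_Icc] with x hx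
      apply ENNReal.ofReal_le_ofReal
      gcongr
      linarith [hx.2]
    rw [← h1, huniv] at hlb
    have hpos : 0 < ENNReal.ofReal (Real.exp (-δ) / c) * volume (Set.Icc (0:ℝ) δ) := by
      apply ENNReal.mul_pos (ENNReal.ofReal_pos.2 (by positivity)).ne'
      rw [Real.volume_Icc, sub_zero]
      exact (ENNReal.ofReal_pos.2 hδ0).ne'
    exact hpos.not_ge hlb
  -- a.e.-measurable versions
  have hae : ∀ i, AEMeasurable (Δ i) μ := by
    intro i
    by_contra h
    exact hν_ne (((Measure.map_of_not_aemeasurable h).symm.trans (hlaw i)).symm)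
  set Δ' : Fin m → Ω → ℝ := fun i => (hae i).mk (Δ i) with hΔ'_def
  have hmeas' : ∀ i, Measurable (Δ' i) := fun i => (hae i).measurable_mk
  have heq : ∀ i, Δ i =ᵐ[μ] Δ' i := fun i => (hae i).ae_eq_mk
  have hmap' : ∀ i, μ.map (Δ' i) = ν := fun i => by
    rw [← Measure.map_congr (heq i)]; exact hlaw i
  have hindep' : iIndepFun Δ' μ := aux_indep_congr heq hindep
  -- a.e. bounds
  have h01 : ∀ i, ∀ᵐ ω ∂μ, Δ' i ω ∈ Set.Icc (0:ℝ) δ := by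
    intro i
    have hν_compl : ν (Set.Icc (0:ℝ) δ)ᶜ = 0 := by
      rw [hν_def, withDensity_apply _ measurableSet_Icc.compl,
        Measure.restrict_restrict measurableSet_Icc.compl, Set.compl_inter_self,
        Measure.restrict_empty, lintegral_zero_measure]
    have hmap_app : μ (Δ' i ⁻¹' (Set.Icc (0:ℝ) δ)ᶜ) = 0 := by
      rw [← Measure.map_apply (hmeas' i) measurableSet_Icc.compl, hmap' i, hν_compl]
    rw [ae_iff]
    convert hmap_app using 2
    rfl
  -- integrability of the exponentials
  have hint : ∀ i, Integrable (fun ω => Real.exp (-1 * Δ' i ω)) μ := by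
    intro i
    refine Integrable.mono' (integrable_const 1)
      (((hmeas' i).const_mul (-1)).exp).aestronglyMeasurable ?_
    filter_upwards [h01 i] with ω hω
    rw [Real.norm_eq_abs, abs_of_pos (Real.exp_pos _)]
    exact Real.exp_le_one_iff.2 (by nlinarith [hω.1])
  have hintS : Integrable (fun ω => Real.exp (-1 * (∑ i, Δ' i) ω)) μ := by
    have hSmeas : Measurable (∑ i, Δ' i : Ω → ℝ) := by
      have : (∑ i, Δ' i : Ω → ℝ) = fun ω => ∑ i, Δ' i ω := by
        funext ω; simp [Finset.sum_apply]
      rw [this]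
      exact Finset.measurable_sum Finset.univ fun i _ => hmeas' i
    refine Integrable.mono' (integrable_const 1)
      ((hSmeas.const_mul (-1)).exp).aestronglyMeasurable ?_
    filter_upwards [ae_all_iff.2 h01] with ω hω
    rw [Real.norm_eq_abs, abs_of_pos (Real.exp_pos _)]
    refine Real.exp_le_one_iff.2 ?_
    have hnn : 0 ≤ (∑ i, Δ' i) ω := by
      rw [Finset.sum_apply]
      exact Finset.sum_nonneg fun i _ => (hω i).1
    nlinarith
  -- mgf bound for each coordinate
  have hI : ∀ i, mgf (Δ' i) μ (-1) ≤ 101/200 := by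
    intro i
    have h1 : mgf (Δ' i) μ (-1) = ∫ x, Real.exp (-1 * x) ∂(μ.map (Δ' i)) := by
      rw [integral_map (hmeas' i).aemeasurable
        (Continuous.aestronglyMeasurable (by continuity))]
      rfl
    rw [h1, hmap' i, hν_def]
    refine (aux_integral hc0).trans ?_
    rw [div_le_div_iff₀ (by positivity) (by norm_num)]
    linarith
  -- Chernoff bound
  have hch := measure_le_le_exp_mul_mgf (μ := μ) (X := ∑ i, Δ' i) ((m:ℝ)/4)
    (by norm_num : (-1:ℝ) ≤ 0) hintS
  have hmgf_sum : mgf (∑ i, Δ' i) μ (-1) = ∏ i, mgf (Δ' i) μ (-1) :=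
    hindep'.mgf_sum hmeas' Finset.univ
  have hprod : ∏ i, mgf (Δ' i) μ (-1) ≤ (101/200 : ℝ) ^ m := by
    calc ∏ i, mgf (Δ' i) μ (-1) ≤ ∏ _i : Fin m, (101/200 : ℝ) :=
          Finset.prod_le_prod (fun i _ => mgf_nonneg) (fun i _ => hI i)
      _ = (101/200 : ℝ) ^ m := by rw [Finset.prod_const, Finset.card_univ, Fintype.card_fin]
  have hA : (μ {ω | (∑ i, Δ' i) ω ≤ (m:ℝ)/4}).toReal ≤ (2:ℝ) ^ ((3:ℝ) - (m:ℝ)/2) := by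
    refine hch.trans ?_
    calc Real.exp (-(-1) * ((m:ℝ)/4)) * mgf (∑ i, Δ' i) μ (-1)
        ≤ Real.exp (-(-1) * ((m:ℝ)/4)) * (101/200 : ℝ) ^ m := by
          rw [hmgf_sum]
          exact mul_le_mul_of_nonneg_left hprod (Real.exp_pos _).le
      _ ≤ (2:ℝ) ^ ((3:ℝ) - (m:ℝ)/2) := aux_numeric m
  -- assemble in ℝ≥0∞
  have hAe : μ {ω | (∑ i, Δ' i) ω ≤ (m:ℝ)/4}
      ≤ ENNReal.ofReal ((2:ℝ) ^ ((3:ℝ) - (m:ℝ)/2)) := by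
    rw [← ENNReal.ofReal_toReal (measure_ne_top μ _)]
    exact ENNReal.ofReal_le_ofReal hA
  have hset : μ {ω | (m:ℝ)/4 < ∑ i, Δ i ω} = μ {ω | (m:ℝ)/4 < (∑ i, Δ' i) ω} := by
    apply measure_congr
    rw [Filter.eventuallyEq_set]
    filter_upwards [ae_all_iff.2 heq] with ω hω
    simp only [Set.mem_setOf_eq, Finset.sum_apply]
    rw [Finset.sum_congr rfl fun i _ => hω i]
  have hAB : (1 : ℝ≥0∞) ≤ μ {ω | (∑ i, Δ' i) ω ≤ (m:ℝ)/4}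
      + μ {ω | (m:ℝ)/4 < (∑ i, Δ' i) ω} := by
    have hsub : (Set.univ : Set Ω) ⊆ {ω | (∑ i, Δ' i) ω ≤ (m:ℝ)/4}
        ∪ {ω | (m:ℝ)/4 < (∑ i, Δ' i) ω} := by
      intro ω _
      rcases le_or_gt ((∑ i, Δ' i) ω) ((m:ℝ)/4) with h | h
      · exact Or.inl h
      · exact Or.inr h
    calc (1 : ℝ≥0∞) = μ Set.univ := (measure_univ).symm
      _ ≤ μ ({ω | (∑ i, Δ' i) ω ≤ (m:ℝ)/4} ∪ {ω | (m:ℝ)/4 < (∑ i, Δ' i) ω}) :=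
          measure_mono hsub
      _ ≤ _ := measure_union_le _ _
  rw [hset]
  calc ENNReal.ofReal (1 - 2 ^ ((3 : ℝ) - (m : ℝ) / 2))
      = ENNReal.ofReal 1 - ENNReal.ofReal ((2:ℝ) ^ ((3:ℝ) - (m:ℝ)/2)) :=
        ENNReal.ofReal_sub _ (by positivity)
    _ ≤ 1 - μ {ω | (∑ i, Δ' i) ω ≤ (m:ℝ)/4} := by
        rw [ENNReal.ofReal_one]
        exact tsub_le_tsub_left hAe 1
    _ ≤ μ {ω | (m:ℝ)/4 < (∑ i, Δ' i) ω} := by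
        rw [tsub_le_iff_right]
        rw [add_comm]
        exact hAB
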